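/- Let f(ω) = Σ_{j=1}^n a_j e^{i y_j ω} with a_j ∈ ℂ, y_j ∈ ℝ, and let μ ∈ ℝ, λ > 0, Ω > 0. Define the model error E_mod(ω) = [(f·(χ_{[-Ω,Ω]} - 1)·e^{-iμ·}) ∗ G_λ](ω), where G_λ(ω) = √(λ/π)e^{-λω²}. Then for every 0 < ε < 1 and every ω ∈ [(-1+ε)Ω, (1-ε)Ω], |E_mod(ω)| ≤ (Σ_j |a_j|)/√π · [Φ(-√λ·εΩ) + Φ(√λ(-2Ω + εΩ))], where Φ(x) = ∫_{-∞}^x e^{-t²} dt. -/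

import Mathlib

open MeasureTheory Real Complex

section Helpers
open Set

lemma expsq_integrable : Integrable (fun t : ℝ => Real.exp (-t ^ 2)) := by
  simpa using integrable_exp_neg_mul_sq (one_pos)

lemma integral_Iic_comp_add_right (g : ℝ → ℝ) (d c : ℝ) :
    ∫ t in Iic d, g (t + c) = ∫ t in Iic (d + c), g t := by
  rw [← integral_indicator measurableSet_Iic, ← integral_indicator measurableSet_Iic,
    ← integral_add_right_eq_self (Set.indicator (Iic (d + c)) g) c]
  congr 1
  ext t
  by_cases h : t ≤ d
  · rw [Set.indicator_of_mem (by exact h : t ∈ Iic d),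
      Set.indicator_of_mem (by simp [Set.mem_Iic]; linarith : t + c ∈ Iic (d + c))]
  · rw [Set.indicator_of_notMem (by exact h : t ∉ Iic d),
      Set.indicator_of_notMem (by simpa using h : t + c ∉ Iic (d + c))]

lemma integral_Iic_comp_mul_add (g : ℝ → ℝ) {s : ℝ} (hs : 0 < s) (b c : ℝ) :
    ∫ η in Iic b, g (s * η + c) = s⁻¹ * ∫ t in Iic (s * b + c), g t := by
  have h1 : ∫ η in Iic b, g (s * η + c)
      = ∫ x in Ioi (-b), (fun y => g (-(s * y) + c)) x := by
    rw [← integral_comp_neg_Iic]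
    congr 1; ext x; ring_nf
  rw [h1, integral_comp_mul_left_Ioi (fun y => g (-y + c)) (-b) hs]
  rw [smul_eq_mul]
  congr 1
  have h2 : ∫ x in Ioi (s * -b), g (-x + c) = ∫ x in Iic (-(s * -b)), g (x + c) := by
    rw [← integral_comp_neg_Ioi]
  rw [h2, integral_Iic_comp_add_right]
  congr 1; ring

lemma phi_rearrange {a b A B : ℝ} (ha : 0 ≤ a) (haA : a ≤ A) (haB : a ≤ B)
    (hsum : A + B = a + b) :
    (∫ t in Iic (-A), Real.exp (-t ^ 2)) + (∫ t in Iic (-B), Real.exp (-t ^ 2)) ≤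
    (∫ t in Iic (-a), Real.exp (-t ^ 2)) + (∫ t in Iic (-b), Real.exp (-t ^ 2)) := by
  set δ := B - a with hδdef
  have hδ : 0 ≤ δ := by simp [hδdef]; linarith
  have hint : ∀ c : ℝ, IntegrableOn (fun t : ℝ => Real.exp (-t ^ 2)) (Iic c) :=
    fun c => expsq_integrable.integrableOn
  have h1 : (∫ t in Iic (-a), Real.exp (-t ^ 2)) - ∫ t in Iic (-A), Real.exp (-t ^ 2)
      = ∫ t in (-A)..(-a), Real.exp (-t ^ 2) :=
    intervalIntegral.integral_Iic_sub_Iic (hint _) (hint _)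
  have h2 : (∫ t in Iic (-B), Real.exp (-t ^ 2)) - ∫ t in Iic (-b), Real.exp (-t ^ 2)
      = ∫ t in (-b)..(-B), Real.exp (-t ^ 2) :=
    intervalIntegral.integral_Iic_sub_Iic (hint _) (hint _)
  have key : (∫ t in (-b)..(-B), Real.exp (-t ^ 2))
      ≤ ∫ t in (-A)..(-a), Real.exp (-t ^ 2) := by
    have hshift : (∫ t in (-A)..(-a), Real.exp (-(t - δ) ^ 2))
        = ∫ t in (-b)..(-B), Real.exp (-t ^ 2) := by
      rw [intervalIntegral.integral_comp_sub_right (fun t => Real.exp (-t ^ 2)) δ]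
      congr 1 <;> simp [hδdef] <;> linarith
    rw [← hshift]
    apply intervalIntegral.integral_mono_on (by linarith)
    · apply Continuous.intervalIntegrable; continuity
    · apply Continuous.intervalIntegrable; continuity
    · intro t ht
      apply Real.exp_le_exp.mpr
      have ht2 : t ≤ -a := ht.2
      nlinarith
  linarith

end Helpers

/-- Model error bound for centralization and Gaussian windowing. -/
theorem model_error_bound (n : ℕ) (a : Fin n → ℂ) (y : Fin n → ℝ) (μ Ω lam : ℝ)
    (hΩ : 0 < Ω) (hlam : 0 < lam)
    (f : ℝ → ℂ) (hf : ∀ ω, f ω = ∑ j, a j * Complex.exp (Complex.I * y j * ω))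
    (Φ : ℝ → ℝ) (hΦ : ∀ x, Φ x = ∫ t in Set.Iic x, Real.exp (-t ^ 2))
    (Emod : ℝ → ℂ)
    (hE : ∀ ω, Emod ω = ∫ η : ℝ,
        (f η * ((if η ∈ Set.Icc (-Ω) Ω then (1 : ℂ) else 0) - 1) *
          Complex.exp (-Complex.I * μ * η)) *
        (Real.sqrt (lam / Real.pi) * Real.exp (-lam * (ω - η) ^ 2) : ℝ))
    (ε : ℝ) (hε : 0 < ε) (hε1 : ε < 1)
    (ω : ℝ) (hω : ω ∈ Set.Icc ((-1 + ε) * Ω) ((1 - ε) * Ω)) :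
    ‖Emod ω‖ ≤ (∑ j, ‖a j‖) / Real.sqrt Real.pi *
      (Φ (-(Real.sqrt lam) * ε * Ω) + Φ (Real.sqrt lam * (-2 * Ω + ε * Ω))) := by
  set A := ∑ j, ‖a j‖ with hA
  set s := Real.sqrt lam with hsdef
  have hs : 0 < s := Real.sqrt_pos.mpr hlam
  have hs2 : s ^ 2 = lam := Real.sq_sqrt hlam.le
  set c : ℝ := Real.sqrt (lam / Real.pi) with hc
  have hc0 : 0 ≤ c := Real.sqrt_nonneg _
  have hA0 : 0 ≤ A := Finset.sum_nonneg fun j _ => norm_nonneg _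
  set g : ℝ → ℝ := fun η => Real.exp (-lam * (ω - η) ^ 2) with hg
  have hg0 : ∀ η, 0 ≤ g η := fun η => (Real.exp_pos _).le
  -- integrability of the Gaussian
  have hGint : Integrable g := by
    have h := (integrable_exp_neg_mul_sq hlam).comp_sub_right ω
    exact h.congr (Filter.Eventually.of_forall fun η => by
      simp only [hg]; congr 1; ring)
  -- bound on f
  have hfA : ∀ η : ℝ, ‖f η‖ ≤ A := by
    intro η
    rw [hf]
    refine le_trans (norm_sum_le _ _) (Finset.sum_le_sum fun j _ => ?_)
    rw [norm_mul]
    have : ‖Complex.exp (Complex.I * (y j) * (η : ℂ))‖ = 1 := by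
      rw [Complex.norm_exp]
      simp [Complex.mul_re]
    rw [this, mul_one]
  -- the bound function
  set Bnd : ℝ → ℝ := Set.indicator ((Set.Icc (-Ω) Ω)ᶜ) (fun η => A * (c * g η)) with hBnd
  have hBint : Integrable Bnd :=
    (((hGint.const_mul c).const_mul A)).indicator measurableSet_Icc.compl
  have hle : ∀ η : ℝ, ‖(f η * ((if η ∈ Set.Icc (-Ω) Ω then (1 : ℂ) else 0) - 1) *
          Complex.exp (-Complex.I * μ * η)) *
        ((Real.sqrt (lam / Real.pi) * Real.exp (-lam * (ω - η) ^ 2) : ℝ) : ℂ)‖ ≤ Bnd η := by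
    intro η
    by_cases hη : η ∈ Set.Icc (-Ω) Ω
    · simp [hBnd, Set.indicator_of_notMem, hη]
    · rw [hBnd, Set.indicator_of_mem (by simpa using hη)]
      rw [if_neg hη]
      rw [norm_mul, norm_mul, norm_mul]
      have h1 : ‖Complex.exp (-Complex.I * μ * η)‖ = 1 := by
        rw [Complex.norm_exp]
        simp [Complex.mul_re]
      have h2 : ‖((0 : ℂ) - 1)‖ = 1 := by simp
      have h3 : ‖((Real.sqrt (lam / Real.pi) * Real.exp (-lam * (ω - η) ^ 2) : ℝ) : ℂ)‖
          = c * g η := by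
        rw [Complex.norm_real, Real.norm_eq_abs]
        exact abs_of_nonneg (by positivity)
      rw [h1, h2, h3, mul_one, mul_one]
      exact mul_le_mul_of_nonneg_right (hfA η) (by positivity)
  -- main chain
  have step1 : ‖Emod ω‖ ≤ ∫ η, Bnd η := by
    rw [hE]
    refine le_trans (norm_integral_le_integral_norm _) ?_
    exact integral_mono_of_nonneg (Filter.Eventually.of_forall fun η => norm_nonneg _)
      hBint (Filter.Eventually.of_forall hle)
  have hcompl : (Set.Icc (-Ω) Ω)ᶜ = Set.Iio (-Ω) ∪ Set.Ioi Ω := by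
    ext x
    simp only [Set.mem_compl_iff, Set.mem_Icc, Set.mem_union, Set.mem_Iio, Set.mem_Ioi,
      not_and_or, not_le]
  have hdisj : Disjoint (Set.Iio (-Ω)) (Set.Ioi Ω) := by
    rw [Set.disjoint_left]
    intro x hx hx'
    have h1 : x < -Ω := hx
    have h2 : Ω < x := hx'
    linarith
  have step2 : ∫ η, Bnd η = (A * c) * ((∫ η in Set.Iic (-Ω), g η) + ∫ η in Set.Ioi Ω, g η) := by
    rw [hBnd, integral_indicator measurableSet_Icc.compl, hcompl,
      setIntegral_union hdisj measurableSet_Ioi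
        ((hGint.const_mul c).const_mul A).integrableOn
        ((hGint.const_mul c).const_mul A).integrableOn,
      ← integral_Iic_eq_integral_Iio]
    simp_rw [← mul_assoc]
    rw [integral_const_mul, integral_const_mul, mul_add]
  -- tail computations
  have hI1 : (∫ η in Set.Iic (-Ω), g η) = s⁻¹ * Φ (s * (-Ω) + -(s * ω)) := by
    rw [hΦ, ← integral_Iic_comp_mul_add (fun t => Real.exp (-t ^ 2)) hs (-Ω) (-(s * ω))]
    refine setIntegral_congr_fun measurableSet_Iic fun η _ => ?_
    simp only [hg]
    congr 1
    rw [← hs2]; ring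
  have hI2 : (∫ η in Set.Ioi Ω, g η) = s⁻¹ * Φ (s * (-Ω) + s * ω) := by
    have hneg : (∫ η in Set.Ioi Ω, g η)
        = ∫ x in Set.Iic (-Ω), g (-x) := by
      rw [integral_comp_neg_Iic, neg_neg]
    rw [hneg, hΦ, ← integral_Iic_comp_mul_add (fun t => Real.exp (-t ^ 2)) hs (-Ω) (s * ω)]
    refine setIntegral_congr_fun measurableSet_Iic fun x _ => ?_
    simp only [hg]
    congr 1
    rw [← hs2]; ring
  -- prefactor
  have hcs : c * s⁻¹ = 1 / Real.sqrt Real.pi := by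
    rw [hc, Real.sqrt_div hlam.le, ← hsdef]
    field_simp
  -- rearrangement
  have hre : Φ (s * (-Ω) + -(s * ω)) + Φ (s * (-Ω) + s * ω)
      ≤ Φ (-s * ε * Ω) + Φ (s * (-2 * Ω + ε * Ω)) := by
    have e1 : s * (-Ω) + -(s * ω) = -(s * (Ω + ω)) := by ring
    have e2 : s * (-Ω) + s * ω = -(s * (Ω - ω)) := by ring
    have e3 : -s * ε * Ω = -(s * (ε * Ω)) := by ring
    have e4 : s * (-2 * Ω + ε * Ω) = -(s * (2 * Ω - ε * Ω)) := by ring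
    rw [e1, e2, e3, e4, hΦ, hΦ, hΦ, hΦ]
    have := phi_rearrange (a := s * (ε * Ω)) (b := s * (2 * Ω - ε * Ω))
      (A := s * (Ω + ω)) (B := s * (Ω - ω))
      (by positivity)
      (by nlinarith [hω.1])
      (by nlinarith [hω.2])
      (by ring)
    linarith
  calc ‖Emod ω‖ ≤ ∫ η, Bnd η := step1
    _ = (A * c) * ((∫ η in Set.Iic (-Ω), g η) + ∫ η in Set.Ioi Ω, g η) := step2
    _ = A * (c * s⁻¹) * (Φ (s * (-Ω) + -(s * ω)) + Φ (s * (-Ω) + s * ω)) := by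
        rw [hI1, hI2]; ring
    _ = A / Real.sqrt Real.pi * (Φ (s * (-Ω) + -(s * ω)) + Φ (s * (-Ω) + s * ω)) := by
        rw [hcs]; ring
    _ ≤ A / Real.sqrt Real.pi * (Φ (-s * ε * Ω) + Φ (s * (-2 * Ω + ε * Ω))) := by
        apply mul_le_mul_of_nonneg_left hre (by positivity)
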